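/- Let e = {u,v} be a redundant edge of G and x a vertex of G not in the closed neighbourhood of {u,v}. Then either e is redundant in G_x, or α(G_x) ≤ α(G) − 2. -/

import Mathlib

open SimpleGraph

/-- The independence number of a graph. -/
noncomputable def indepNum' {V : Type} (G : SimpleGraph V) : ℕ :=
  sSup {n : ℕ | ∃ s : Set V, s.Finite ∧ s.ncard = n ∧ ∀ a ∈ s, ∀ b ∈ s, ¬ G.Adj a b}

/-- The number of edges of a graph. -/
noncomputable def numEdges {V : Type} (G : SimpleGraph V) : ℕ := G.edgeSet.ncard

/-- The degree (valency) of a vertex. -/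
noncomputable def deg {V : Type} (G : SimpleGraph V) (v : V) : ℕ := (G.neighborSet v).ncard

/-- The second valency `d²(v) = ∑_{w ∈ N(v)} d(w)`. -/
noncomputable def secondDeg {V : Type} (G : SimpleGraph V) (v : V) : ℕ :=
  ∑ᶠ w ∈ G.neighborSet v, deg G w

/-- `p = (a,b,c,d)` is an (ordered) 4-cycle of `G`. -/
def IsC4 {V : Type} (G : SimpleGraph V) (p : V × V × V × V) : Prop :=
  G.Adj p.1 p.2.1 ∧ G.Adj p.2.1 p.2.2.1 ∧ G.Adj p.2.2.1 p.2.2.2 ∧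
    G.Adj p.2.2.2 p.1 ∧ p.1 ≠ p.2.2.1 ∧ p.2.1 ≠ p.2.2.2

/-- The number of 4-cycles of `G`; each 4-cycle yields 8 ordered tuples. -/
noncomputable def numC4 {V : Type} (G : SimpleGraph V) : ℕ :=
  {p : V × V × V × V | IsC4 G p}.ncard / 8

/-- The number of 4-cycles of `G` containing a vertex of `S`. -/
noncomputable def numC4Through {V : Type} (G : SimpleGraph V) (S : Set V) : ℕ :=
  {p : V × V × V × V | IsC4 G p ∧ (p.1 ∈ S ∨ p.2.1 ∈ S ∨ p.2.2.1 ∈ S ∨ p.2.2.2 ∈ S)}.ncard / 8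

/-- The invariant `ν(G) = 3e(G) − 17n(G) + 35α(G) + N(C₄;G)`. -/
noncomputable def nu {V : Type} (G : SimpleGraph V) : ℤ :=
  3 * (numEdges G : ℤ) - 17 * (Nat.card V : ℤ) + 35 * (indepNum' G : ℤ) + (numC4 G : ℤ)

/-- The closed neighbourhood `N[v]`. -/
def closedNbhd {V : Type} (G : SimpleGraph V) (v : V) : Set V := insert v (G.neighborSet v)

/-- `S` destabilises `G` : removing `S` decreases the independence number. -/
def Destab {V : Type} (G : SimpleGraph V) (S : Set V) : Prop :=
  indepNum' (G.induce Sᶜ) < indepNum' G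

/-- `G` is edge-critical (α-critical): removing any edge increases the independence number. -/
def EdgeCritical {V : Type} (G : SimpleGraph V) : Prop :=
  ∀ e ∈ G.edgeSet, indepNum' G < indepNum' (G.deleteEdges {e})

lemma indep_bdd {V : Type} [Finite V] (G : SimpleGraph V) :
    BddAbove {n : ℕ | ∃ s : Set V, s.Finite ∧ s.ncard = n ∧ ∀ a ∈ s, ∀ b ∈ s, ¬ G.Adj a b} := by
  refine ⟨Nat.card V, ?_⟩
  rintro n ⟨s, hs, rfl, -⟩
  simpa [Set.ncard_univ] using Set.ncard_le_ncard (Set.subset_univ s) Set.finite_univ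

lemma le_indepNum {V : Type} [Finite V] {G : SimpleGraph V} {s : Set V}
    (h : ∀ a ∈ s, ∀ b ∈ s, ¬ G.Adj a b) : s.ncard ≤ indepNum' G :=
  le_csSup (indep_bdd G) ⟨s, s.toFinite, rfl, h⟩

lemma exists_indep {V : Type} [Finite V] (G : SimpleGraph V) :
    ∃ s : Set V, s.Finite ∧ s.ncard = indepNum' G ∧ ∀ a ∈ s, ∀ b ∈ s, ¬ G.Adj a b := by
  have hne : {n : ℕ | ∃ s : Set V, s.Finite ∧ s.ncard = n ∧
      ∀ a ∈ s, ∀ b ∈ s, ¬ G.Adj a b}.Nonempty :=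
    ⟨0, ∅, Set.finite_empty, by simp, by simp⟩
  exact Nat.sSup_mem hne (indep_bdd G)

lemma indepNum_le_deleteEdges {V : Type} [Finite V] (G : SimpleGraph V) (A : Set (Sym2 V)) :
    indepNum' G ≤ indepNum' (G.deleteEdges A) := by
  obtain ⟨s, hs, hcard, hind⟩ := exists_indep G
  rw [← hcard]
  exact le_indepNum fun a ha b hb hadj => hind a ha b hb (hadj.1)

/-- If `e = {u,v}` is a redundant edge of `G` and `x ∉ N[{u,v}]`, then either `e` is
redundant in `G_x`, or `α(G_x) ≤ α(G) − 2`. -/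
theorem stmt8 {V : Type} [Fintype V] (G : SimpleGraph V) (u v x : V) (hadj : G.Adj u v)
    (hred : indepNum' (G.deleteEdges {s(u, v)}) = indepNum' G)
    (hu : u ∈ (closedNbhd G x)ᶜ) (hv : v ∈ (closedNbhd G x)ᶜ) :
    indepNum' ((G.induce (closedNbhd G x)ᶜ).deleteEdges
        {s((⟨u, hu⟩ : ↥(closedNbhd G x)ᶜ), (⟨v, hv⟩ : ↥(closedNbhd G x)ᶜ))}) =
      indepNum' (G.induce (closedNbhd G x)ᶜ) ∨
    indepNum' (G.induce (closedNbhd G x)ᶜ) + 2 ≤ indepNum' G := by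
  set S : Set V := (closedNbhd G x)ᶜ with hS
  set H := G.induce S with hH
  set u' : ↥S := ⟨u, hu⟩
  set v' : ↥S := ⟨v, hv⟩
  by_cases hcase : indepNum' (H.deleteEdges {s(u', v')}) = indepNum' H
  · exact Or.inl hcase
  right
  have hmono := indepNum_le_deleteEdges H {s(u', v')}
  have hlt : indepNum' H + 1 ≤ indepNum' (H.deleteEdges {s(u', v')}) :=
    lt_of_le_of_ne hmono (Ne.symm hcase)
  obtain ⟨s, hsfin, hscard, hsind⟩ := exists_indep (H.deleteEdges {s(u', v')})
  -- the lifted set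
  set T : Set V := insert x (Subtype.val '' s) with hT
  have hxnot : x ∉ Subtype.val '' s := by
    rintro ⟨⟨a, ha⟩, -, heq⟩
    exact ha (by rw [show a = x from heq]; exact Set.mem_insert _ _)
  have hnadjx : ∀ c : ↥S, ¬ G.Adj x ↑c := by
    rintro ⟨c, hc⟩ hadj'
    exact hc (Set.mem_insert_iff.2 (Or.inr hadj'))
  have hTind : ∀ a ∈ T, ∀ b ∈ T, ¬ (G.deleteEdges {s(u, v)}).Adj a b := by
    intro a ha b hb hadj'
    rw [hT, Set.mem_insert_iff] at ha hb
    rw [SimpleGraph.deleteEdges_adj] at hadj'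
    obtain rfl | ⟨a', ha', rfl⟩ := ha
    · obtain rfl | ⟨b', hb', rfl⟩ := hb
      · exact G.irrefl hadj'.1
      · exact hnadjx b' hadj'.1
    · obtain rfl | ⟨b', hb', rfl⟩ := hb
      · exact hnadjx a' hadj'.1.symm
      · refine hsind a' ha' b' hb' ?_
        rw [SimpleGraph.deleteEdges_adj]
        refine ⟨hadj'.1, ?_⟩
        intro hmem
        apply hadj'.2
        rw [Set.mem_singleton_iff] at hmem ⊢
        have h2 := congrArg (Sym2.map (Subtype.val : ↥S → V)) hmem
        rwa [Sym2.map_pair_eq, Sym2.map_pair_eq] at h2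
  have hTcard : T.ncard = s.ncard + 1 := by
    rw [hT, Set.ncard_insert_of_notMem hxnot ((hsfin.image _))]
    rw [Set.ncard_image_of_injective _ Subtype.val_injective]
  have h1 : T.ncard ≤ indepNum' (G.deleteEdges {s(u, v)}) := le_indepNum hTind
  rw [hTcard, hscard, hred] at h1
  omega
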